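/- If P is a centrally symmetric convex polygon centered at the origin forming a k-fold lattice tiling of ℝ² with lattice Λ, then the relative interior of every edge G of P contains a point of (1/2)Λ. -/

import Mathlib

set_option maxHeartbeats 1000000
open Set


noncomputable section BolleAux

/-- Determinant form on `ℝ × ℝ`. -/
private def det2 (p q : ℝ × ℝ) : ℝ := p.1 * q.2 - p.2 * q.1

private lemma apply_eq_coords (f : (ℝ × ℝ) →L[ℝ] ℝ) (p : ℝ × ℝ) :
    f p = p.1 * f (1, 0) + p.2 * f (0, 1) := by
  have h : p = p.1 • ((1 : ℝ), (0 : ℝ)) + p.2 • ((0 : ℝ), (1 : ℝ)) := by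
    simp [Prod.ext_iff]
  calc f p = f (p.1 • ((1 : ℝ), (0 : ℝ)) + p.2 • ((0 : ℝ), (1 : ℝ))) := by rw [← h]
    _ = p.1 * f (1, 0) + p.2 * f (0, 1) := by
        rw [map_add, map_smul, map_smul]; simp [smul_eq_mul]

/-- if `u ≠ 0` and `det2 u v = 0` then `v` is a multiple of `u`. -/
private lemma det2_eq_zero_imp {u v : ℝ × ℝ} (hu : u ≠ 0) (h : det2 u v = 0) :
    ∃ τ : ℝ, v = τ • u := by
  unfold det2 at h
  by_cases h1 : u.1 = 0
  · have h2 : u.2 ≠ 0 := fun h2 => hu (Prod.ext h1 h2)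
    refine ⟨v.2 / u.2, Prod.ext ?_ ?_⟩
    · show v.1 = v.2 / u.2 * u.1
      field_simp
      nlinarith [h]
    · show v.2 = v.2 / u.2 * u.2
      field_simp
  · refine ⟨v.1 / u.1, Prod.ext ?_ ?_⟩
    · show v.1 = v.1 / u.1 * u.1
      field_simp
    · show v.2 = v.1 / u.1 * u.2
      field_simp
      nlinarith [h]

/-- Two vectors annihilated by a nonzero functional are proportional. -/
private lemma collinear_of_ker {f : (ℝ × ℝ) →L[ℝ] ℝ} {w e r : ℝ × ℝ} (hw : f w ≠ 0)
    (he : f e = 0) (he0 : e ≠ 0) (hr : f r = 0) : ∃ τ : ℝ, r = τ • e := by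
  set c1 := f (1, 0) with hc1
  set c2 := f (0, 1) with hc2
  have hee : e.1 * c1 + e.2 * c2 = 0 := by rw [← apply_eq_coords]; exact he
  have hrr : r.1 * c1 + r.2 * c2 = 0 := by rw [← apply_eq_coords]; exact hr
  have hcne : c1 ≠ 0 ∨ c2 ≠ 0 := by
    by_contra hc
    push_neg at hc
    exact hw (by rw [apply_eq_coords, ← hc1, ← hc2, hc.1, hc.2]; ring)
  have hdet : det2 e r = 0 := by
    unfold det2
    rcases hcne with hc | hc
    · have : (e.1 * r.2 - e.2 * r.1) * c1 =
        r.2 * (e.1 * c1 + e.2 * c2) - e.2 * (r.1 * c1 + r.2 * c2) := by ring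
      rw [hee, hrr] at this
      have h0 : (e.1 * r.2 - e.2 * r.1) * c1 = 0 := by linarith
      rcases mul_eq_zero.mp h0 with h' | h'
      · linarith
      · exact absurd h' hc
    · have : (e.1 * r.2 - e.2 * r.1) * c2 =
        e.1 * (r.1 * c1 + r.2 * c2) - r.1 * (e.1 * c1 + e.2 * c2) := by ring
      rw [hee, hrr] at this
      have h0 : (e.1 * r.2 - e.2 * r.1) * c2 = 0 := by linarith
      rcases mul_eq_zero.mp h0 with h' | h'
      · linarith
      · exact absurd h' hc
  exact det2_eq_zero_imp he0 hdet

end BolleAux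

section Part2
variable {f : (ℝ × ℝ) →L[ℝ] ℝ}

private lemma mem_openSegment_of_param {p q x : ℝ × ℝ} (θ : ℝ) (h0 : 0 < θ) (h1 : θ < 1)
    (hx : x = p + θ • (q - p)) : x ∈ openSegment ℝ p q := by
  rw [openSegment_eq_image']
  exact ⟨θ, ⟨h0, h1⟩, hx.symm⟩

private lemma mem_segment_of_param {p q x : ℝ × ℝ} (θ : ℝ) (h0 : 0 ≤ θ) (h1 : θ ≤ 1)
    (hx : x = p + θ • (q - p)) : x ∈ segment ℝ p q := by
  rw [segment_eq_image']
  exact ⟨θ, ⟨h0, h1⟩, hx.symm⟩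

/-- A continuous affine parameter along the line `{x | f x = f p}` through `p ≠ q`. -/
private lemma exists_param {w : ℝ × ℝ} (hw : f w ≠ 0) {p q : ℝ × ℝ} (hpq : p ≠ q)
    (hline : f q = f p) :
    ∃ g : ℝ × ℝ → ℝ, Continuous g ∧ (∀ x, f x = f p → x = p + g x • (q - p)) ∧
      g p = 0 ∧ g q = 1 := by
  have he0 : q - p ≠ 0 := sub_ne_zero.mpr (Ne.symm hpq)
  have hfe : f (q - p) = 0 := by rw [map_sub, hline, sub_self]
  have key : ∀ g : ℝ × ℝ → ℝ, (∀ z, f z = f p → (z - p) = g z • (q - p)) →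
      (∀ x, f x = f p → x = p + g x • (q - p)) := by
    intro g hg x hx
    have := hg x hx
    rw [← this]; abel
  by_cases h1 : (q - p).1 ≠ 0
  · refine ⟨fun x => (x - p).1 / (q - p).1, by fun_prop, ?_, by simp, by field_simp [sub_ne_zero.mpr (fun h : q.1 = p.1 => h1 (by simp [h]))]⟩
    refine key _ fun z hz => ?_
    have hfz : f (z - p) = 0 := by rw [map_sub, hz, sub_self]
    obtain ⟨τ, hτ⟩ := collinear_of_ker hw hfe he0 hfz
    rw [hτ, Prod.smul_fst, smul_eq_mul, mul_div_assoc, div_self h1, mul_one]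
  · push_neg at h1
    have h2 : (q - p).2 ≠ 0 := by
      intro h2; exact he0 (Prod.ext h1 h2)
    refine ⟨fun x => (x - p).2 / (q - p).2, by fun_prop, ?_, by simp, by field_simp [sub_ne_zero.mpr (fun h : q.2 = p.2 => h2 (by simp [h]))]⟩
    refine key _ fun z hz => ?_
    have hfz : f (z - p) = 0 := by rw [map_sub, hz, sub_self]
    obtain ⟨τ, hτ⟩ := collinear_of_ker hw hfe he0 hfz
    rw [hτ, Prod.smul_snd, smul_eq_mul, mul_div_assoc, div_self h2, mul_one]

end Part2

section Part3

/-- A face of a convex set at the max of a functional, pinned between two extreme points,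
is exactly the segment between them. -/
private lemma face_eq {P : Set (ℝ × ℝ)} (hconv : Convex ℝ P) {f : (ℝ × ℝ) →L[ℝ] ℝ} {c : ℝ}
    {w a b : ℝ × ℝ} (hw : f w ≠ 0)
    (ha : a ∈ P.extremePoints ℝ) (hb : b ∈ P.extremePoints ℝ) (hab : a ≠ b)
    (hfa : f a = c) (hfb : f b = c) (hle : ∀ x ∈ P, f x ≤ c) :
    {x ∈ P | f x = c} = segment ℝ a b := by
  have haP : a ∈ P := ha.1
  have hbP : b ∈ P := hb.1
  ext x
  constructor
  · rintro ⟨hxP, hxc⟩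
    have hfe : f (b - a) = 0 := by rw [map_sub, hfa, hfb, sub_self]
    have he0 : b - a ≠ 0 := sub_ne_zero.mpr (Ne.symm hab)
    have hfx : f (x - a) = 0 := by rw [map_sub, hfa, hxc, sub_self]
    obtain ⟨τ, hτ⟩ := collinear_of_ker hw hfe he0 hfx
    have hx : x = a + τ • (b - a) := by rw [← hτ]; abel
    rcases le_or_gt τ 0 with h0 | h0
    · rcases eq_or_lt_of_le h0 with h0' | h0'
      · exact mem_segment_of_param τ (le_of_eq h0'.symm) (by linarith) hx
      · exfalso
        have hmem : a ∈ openSegment ℝ x b := by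
          refine mem_openSegment_of_param (-τ / (1 - τ)) (div_pos (by linarith) (by linarith))
            (by rw [div_lt_one (by linarith)]; linarith) ?_
          have h1τ : (1 : ℝ) - τ ≠ 0 := by linarith
          rw [hx]
          have : (-τ / (1 - τ)) • (b - (a + τ • (b - a))) = (-τ / (1 - τ) * (1 - τ)) • (b - a) := by
            rw [show b - (a + τ • (b - a)) = (1 - τ) • (b - a) by module, smul_smul]
          rw [this, div_mul_cancel₀ _ h1τ]
          module
        obtain ⟨h1, h2⟩ := (mem_extremePoints.mp ha).2 _ hxP _ hbP hmem
        exact hab h2.symm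
    · rcases le_or_gt τ 1 with h1 | h1
      · exact mem_segment_of_param τ (le_of_lt h0) h1 hx
      · exfalso
        have hmem : b ∈ openSegment ℝ a x := by
          refine mem_openSegment_of_param (1 / τ) (by positivity)
            ((div_lt_one (by linarith)).mpr h1) ?_
          rw [hx, show a + τ • (b - a) - a = τ • (b - a) by module, smul_smul,
            one_div_mul_cancel (by show τ ≠ 0; linarith), one_smul]
          abel
        obtain ⟨h1', h2'⟩ := (mem_extremePoints.mp hb).2 _ haP _ hxP hmem
        exact hab h1'
  · intro hx
    rw [segment_eq_image'] at hx
    obtain ⟨θ, ⟨hθ0, hθ1⟩, rfl⟩ := hx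
    refine ⟨hconv.segment_subset haP hbP (mem_segment_of_param θ hθ0 hθ1 rfl), ?_⟩
    rw [map_add, map_smul, map_sub, hfa, hfb, sub_self, smul_zero, add_zero]

/-- extreme points of a symmetric set are closed under negation. -/
private lemma neg_extremePoint {P : Set (ℝ × ℝ)} (hsymm : ∀ x ∈ P, -x ∈ P)
    {a : ℝ × ℝ} (ha : a ∈ P.extremePoints ℝ) : -a ∈ P.extremePoints ℝ := by
  refine ⟨hsymm a ha.1, fun x₁ h₁ x₂ h₂ hseg => ?_⟩
  rw [openSegment_eq_image'] at hseg
  obtain ⟨θ, hθ, hθeq⟩ := hseg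
  have hθeq' : x₁ + θ • (x₂ - x₁) = -a := hθeq
  have hmem : a ∈ openSegment ℝ (-x₁) (-x₂) := by
    refine mem_openSegment_of_param θ hθ.1 hθ.2 ?_
    have ha' : a = -(x₁ + θ • (x₂ - x₁)) := by rw [hθeq', neg_neg]
    rw [ha']
    module
  have e₁ := ((mem_extremePoints.mp ha).2 _ (hsymm x₁ h₁) _ (hsymm x₂ h₂) hmem).1
  rw [← neg_neg x₁, e₁]

end Part3

section Part4

private lemma det2_smul_add (τ : ℝ) (e z a : ℝ × ℝ) :
    det2 (τ • e + z) a = τ * det2 e a + det2 z a := by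
  unfold det2; simp [Prod.smul_fst, Prod.smul_snd, smul_eq_mul]; ring

/-- Decomposition of a vector in the basis `e`, `a₀` with `f e = 0`, `f a₀ ≠ 0`. -/
private lemma decomp {f : (ℝ × ℝ) →L[ℝ] ℝ} {e a₀ : ℝ × ℝ} (he : f e = 0) (he0 : e ≠ 0)
    (ha0 : f a₀ ≠ 0) (z : ℝ × ℝ) :
    z = (det2 z a₀ / det2 e a₀) • e + (f z / f a₀) • a₀ := by
  have hd : det2 e a₀ ≠ 0 := by
    intro hd
    obtain ⟨τ, hτ⟩ := det2_eq_zero_imp he0 hd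
    rw [hτ, map_smul, he, smul_eq_mul, mul_zero] at ha0
    exact ha0 rfl
  set α := det2 z a₀ / det2 e a₀
  set β := f z / f a₀
  have hres : z - α • e - β • a₀ = 0 := by
    set r := z - α • e - β • a₀ with hr
    have hfr : f r = 0 := by
      rw [hr, map_sub, map_sub, map_smul, map_smul, he, smul_eq_mul, smul_eq_mul, mul_zero]
      show f z - 0 - f z / f a₀ * f a₀ = 0
      rw [sub_zero, div_mul_cancel₀ _ ha0, sub_self]
    obtain ⟨τ, hτ⟩ := collinear_of_ker ha0 he he0 hfr
    have hdet : det2 r a₀ = 0 := by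
      have h1 : det2 z a₀ = det2 (α • e + (β • a₀ + r)) a₀ := by
        congr 1; rw [hr]; abel
      rw [det2_smul_add, show β • a₀ + r = β • a₀ + r from rfl] at h1
      have h2 : det2 (β • a₀ + r) a₀ = β * det2 a₀ a₀ + det2 r a₀ := det2_smul_add ..
      have h3 : det2 a₀ a₀ = 0 := by unfold det2; ring
      rw [h2, h3, mul_zero, zero_add] at h1
      have hα : α * det2 e a₀ = det2 z a₀ := div_mul_cancel₀ _ hd
      linarith [h1, hα]
    rw [hτ] at hdet
    have hsm : det2 (τ • e) a₀ = τ * det2 e a₀ := by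
      unfold det2; simp only [Prod.smul_fst, Prod.smul_snd, smul_eq_mul]; ring
    rw [hsm] at hdet
    rcases mul_eq_zero.mp hdet with h | h
    · rw [hτ, h, zero_smul]
    · exact absurd h hd
  have : z = α • e + β • a₀ := by
    have := hres
    rw [sub_eq_zero] at this
    rw [sub_eq_iff_eq_add] at this
    rw [this]; abel
  exact this

end Part4

section Part5

private lemma chord_interior {P : Set (ℝ × ℝ)} (hconv : Convex ℝ P)
    {f : (ℝ × ℝ) →L[ℝ] ℝ} {c : ℝ} {a : ℝ × ℝ}
    (haP : a ∈ P) (hnaP : -a ∈ P) (hfa : f a = c)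
    {h : ℝ} (hh1 : -c < h) (hh2 : h < c)
    {x₁ x₂ : ℝ × ℝ} (hx₁ : x₁ ∈ P) (hx₂ : x₂ ∈ P)
    (hf₁ : f x₁ = h) (hf₂ : f x₂ = h) (hne : x₁ ≠ x₂) :
    openSegment ℝ x₁ x₂ ⊆ interior P := by
  have hc : 0 < c := by linarith
  have hfa0 : f a ≠ 0 := by rw [hfa]; exact ne_of_gt hc
  have hch : c - h ≠ 0 := by intro h'; linarith
  have hch' : c + h ≠ 0 := by intro h'; linarith
  intro x hx
  obtain ⟨g, hgcont, hgparam, hgp, hgq⟩ :=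
    exists_param hfa0 hne (show f x₂ = f x₁ by rw [hf₁, hf₂])
  set e : ℝ × ℝ := x₂ - x₁ with he_def
  have he : f e = 0 := by rw [he_def, map_sub, hf₁, hf₂, sub_self]
  have he0 : e ≠ 0 := sub_ne_zero.mpr (Ne.symm hne)
  -- the open-segment parameter of x
  obtain ⟨θ, hθ, hθeq⟩ := (openSegment_eq_image' ℝ x₁ x₂ ▸ hx :
    x ∈ (fun θ : ℝ => x₁ + θ • (x₂ - x₁)) '' Ioo (0:ℝ) 1)
  have hθeq' : x = x₁ + θ • e := hθeq.symm
  have hfx : f x = h := by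
    rw [hθeq', map_add, map_smul, he, smul_eq_mul, mul_zero, add_zero, hf₁]
  have hgx : g x = θ := by
    have h1 := hgparam x (by rw [hfx, hf₁])
    have h2 : (g x - θ) • e = 0 := by
      have h3 : x₁ + g x • e = x₁ + θ • e := h1.symm.trans hθeq'
      have h4 : g x • e = θ • e := add_left_cancel h3
      rw [sub_smul, h4, sub_self]
    rcases smul_eq_zero.mp h2 with h' | h'
    · linarith [sub_eq_zero.mp h']
    · exact absurd h' he0
  -- two correction maps
  set ψp : ℝ × ℝ → ℝ × ℝ := fun ab =>
    (1 - ab.2 * c / (c - h))⁻¹ • (x + ab.1 • e + ab.2 • a - (ab.2 * c / (c - h)) • a) with hψp_def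
  set ψm : ℝ × ℝ → ℝ × ℝ := fun ab =>
    (1 - -ab.2 * c / (c + h))⁻¹ • (x + ab.1 • e + ab.2 • a + (-ab.2 * c / (c + h)) • a) with hψm_def
  have hψp0 : ψp (0, 0) = x := by simp [hψp_def]
  have hψm0 : ψm (0, 0) = x := by simp [hψm_def]
  have hcontp : ContinuousAt (fun ab => g (ψp ab)) ((0:ℝ), (0:ℝ)) := by
    apply hgcont.continuousAt.comp
    apply ContinuousAt.fun_smul
    · apply ContinuousAt.inv₀
      · fun_prop
      · simp
    · fun_prop
  have hcontm : ContinuousAt (fun ab => g (ψm ab)) ((0:ℝ), (0:ℝ)) := by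
    apply hgcont.continuousAt.comp
    apply ContinuousAt.fun_smul
    · apply ContinuousAt.inv₀
      · fun_prop
      · simp
    · fun_prop
  have hev : ∀ᶠ ab : ℝ × ℝ in nhds (0, 0),
      g (ψp ab) ∈ Ioo (0:ℝ) 1 ∧ g (ψm ab) ∈ Ioo (0:ℝ) 1 := by
    have h1 : ∀ᶠ ab : ℝ × ℝ in nhds (0, 0), g (ψp ab) ∈ Ioo (0:ℝ) 1 := by
      apply hcontp.eventually_mem
      rw [hψp0, hgx]
      exact isOpen_Ioo.mem_nhds hθ
    have h2 : ∀ᶠ ab : ℝ × ℝ in nhds (0, 0), g (ψm ab) ∈ Ioo (0:ℝ) 1 := by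
      apply hcontm.eventually_mem
      rw [hψm0, hgx]
      exact isOpen_Ioo.mem_nhds hθ
    exact h1.and h2
  obtain ⟨δ₀, hδ₀, hball⟩ := Metric.eventually_nhds_iff.mp hev
  set δ : ℝ := min (δ₀ / 2) (min ((c - h) / (2 * c)) ((c + h) / (2 * c))) with hδ_def
  have hδpos : 0 < δ :=
    lt_min (by linarith) (lt_min (div_pos (by linarith) (by linarith))
      (div_pos (by linarith) (by linarith)))
  have hδ1 : δ ≤ δ₀ / 2 := min_le_left _ _
  have hδ2 : δ ≤ (c - h) / (2 * c) := le_trans (min_le_right _ _) (min_le_left _ _)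
  have hδ3 : δ ≤ (c + h) / (2 * c) := le_trans (min_le_right _ _) (min_le_right _ _)
  -- main claim: the whole small parallelogram around x is inside P
  have claim : ∀ α β : ℝ, |α| < δ → |β| < δ → x + α • e + β • a ∈ P := by
    intro α β hα hβ
    have hdist : dist ((α, β) : ℝ × ℝ) ((0:ℝ), (0:ℝ)) < δ₀ := by
      rw [Prod.dist_eq]
      simp only [Real.dist_eq, sub_zero]
      apply max_lt <;> linarith
    obtain ⟨hIoop, hIoom⟩ := hball hdist
    rcases le_or_gt 0 β with hβ0 | hβ0
    · -- use a
      set μ : ℝ := β * c / (c - h) with hμ_def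
      have hμ0 : 0 ≤ μ := by
        apply div_nonneg (by positivity) (by linarith)
      have hμ1 : μ < 1 := by
        rw [hμ_def, div_lt_one (by linarith)]
        have : β < (c - h) / (2 * c) := lt_of_lt_of_le (lt_of_abs_lt hβ) hδ2
        calc β * c < ((c - h) / (2 * c)) * c := by
              apply mul_lt_mul_of_pos_right this hc
          _ = (c - h) / 2 := by field_simp
          _ < c - h := by linarith
      have hμne : (1:ℝ) - μ ≠ 0 := by linarith
      have hfψ : f (ψp (α, β)) = h := by
        have hin : f (x + α • e + β • a - μ • a) = (1 - μ) * h := by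
          rw [map_sub, map_add, map_add, map_smul, map_smul, map_smul, he, hfa, hfx]
          simp only [smul_eq_mul, mul_zero, add_zero]
          rw [hμ_def]
          field_simp
          ring
        show f ((1 - μ)⁻¹ • (x + α • e + β • a - μ • a)) = h
        rw [map_smul, hin, smul_eq_mul]
        field_simp
      have hψseg : ψp (α, β) ∈ segment ℝ x₁ x₂ := by
        have := hgparam (ψp (α, β)) (by rw [hfψ, hf₁])
        exact mem_segment_of_param _ (le_of_lt hIoop.1) (le_of_lt hIoop.2) this
      have hψP : ψp (α, β) ∈ P := hconv.segment_subset hx₁ hx₂ hψseg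
      have hcombo := hconv haP hψP hμ0 (by linarith : (0:ℝ) ≤ 1 - μ) (by ring)
      have heq : μ • a + (1 - μ) • ψp (α, β) = x + α • e + β • a := by
        show μ • a + (1 - μ) • ((1 - μ)⁻¹ • (x + α • e + β • a - μ • a)) = _
        rw [smul_inv_smul₀ hμne]
        abel
      rw [heq] at hcombo
      exact hcombo
    · -- use -a
      set μ : ℝ := -β * c / (c + h) with hμ_def
      have hμ0 : 0 ≤ μ := by
        apply div_nonneg (by nlinarith) (by linarith)
      have hμ1 : μ < 1 := by
        rw [hμ_def, div_lt_one (by linarith)]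
        have : -β < (c + h) / (2 * c) := lt_of_lt_of_le (by rw [← abs_neg] at hβ; exact lt_of_abs_lt hβ) hδ3
        calc -β * c < ((c + h) / (2 * c)) * c := by
              apply mul_lt_mul_of_pos_right this hc
          _ = (c + h) / 2 := by field_simp
          _ < c + h := by linarith
      have hμne : (1:ℝ) - μ ≠ 0 := by linarith
      have hfψ : f (ψm (α, β)) = h := by
        have hin : f (x + α • e + β • a + μ • a) = (1 - μ) * h := by
          rw [map_add, map_add, map_add, map_smul, map_smul, map_smul, he, hfa, hfx]
          simp only [smul_eq_mul, mul_zero, add_zero]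
          rw [hμ_def]
          field_simp
          ring
        show f ((1 - μ)⁻¹ • (x + α • e + β • a + μ • a)) = h
        rw [map_smul, hin, smul_eq_mul]
        field_simp
      have hψseg : ψm (α, β) ∈ segment ℝ x₁ x₂ := by
        have := hgparam (ψm (α, β)) (by rw [hfψ, hf₁])
        exact mem_segment_of_param _ (le_of_lt hIoom.1) (le_of_lt hIoom.2) this
      have hψP : ψm (α, β) ∈ P := hconv.segment_subset hx₁ hx₂ hψseg
      have hcombo := hconv hnaP hψP hμ0 (by linarith : (0:ℝ) ≤ 1 - μ) (by ring)
      have heq : μ • (-a) + (1 - μ) • ψm (α, β) = x + α • e + β • a := by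
        show μ • (-a) + (1 - μ) • ((1 - μ)⁻¹ • (x + α • e + β • a + μ • a)) = _
        rw [smul_inv_smul₀ hμne, smul_neg]
        abel
      rw [heq] at hcombo
      exact hcombo
  -- build an open neighborhood of x inside P
  set Φ : ℝ × ℝ → ℝ × ℝ := fun y =>
    (det2 (y - x) a / det2 e a, f (y - x) / c) with hΦ_def
  have hΦcont : Continuous Φ := by
    apply Continuous.prodMk
    · unfold det2
      fun_prop
    · fun_prop
  set U : Set (ℝ × ℝ) := Φ ⁻¹' Metric.ball 0 δ with hU_def
  have hUopen : IsOpen U := Metric.isOpen_ball.preimage hΦcont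
  have hxU : x ∈ U := by
    have hΦx : Φ x = 0 := by
      simp only [hΦ_def, sub_self, map_zero, zero_div]
      have : det2 0 a = 0 := by unfold det2; simp
      rw [this, zero_div]
      rfl
    simp only [hU_def, mem_preimage, Metric.mem_ball, hΦx, dist_self]
    exact hδpos
  have hUP : U ⊆ P := by
    intro y hy
    simp only [hU_def, mem_preimage, Metric.mem_ball, hΦ_def, Prod.dist_eq] at hy
    set α := det2 (y - x) a / det2 e a
    set β := f (y - x) / c
    have hα : |α| < δ := by
      have := lt_of_le_of_lt (le_max_left (dist α 0) (dist β 0)) hy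
      rwa [Real.dist_eq, sub_zero] at this
    have hβ : |β| < δ := by
      have := lt_of_le_of_lt (le_max_right (dist α 0) (dist β 0)) hy
      rwa [Real.dist_eq, sub_zero] at this
    have hdec := decomp he he0 hfa0 (y - x)
    rw [hfa] at hdec
    have hyeq : y = x + α • e + β • a := by
      rw [show y = x + (y - x) by abel]
      rw [hdec]
      abel
    rw [hyeq]
    exact claim α β hα hβ
  exact mem_interior.mpr ⟨U, hUP, hUopen, hxU⟩

end Part5

section Part6

/-- At a level strictly between `-c` and `c`, the frontier contains at most finitely many
points. -/
private lemma level_frontier_finite {P : Set (ℝ × ℝ)} (hconv : Convex ℝ P) (hcl : IsClosed P)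
    {f : (ℝ × ℝ) →L[ℝ] ℝ} {c : ℝ} {a : ℝ × ℝ}
    (haP : a ∈ P) (hnaP : -a ∈ P) (hfa : f a = c)
    {h : ℝ} (hh1 : -c < h) (hh2 : h < c) :
    {x ∈ frontier P | f x = h}.Finite := by
  have hc : 0 < c := by linarith
  have hfa0 : f a ≠ 0 := by rw [hfa]; exact ne_of_gt hc
  by_contra hinf
  rw [← Set.Infinite] at hinf
  obtain ⟨T, hTsub, hTcard⟩ := hinf.exists_subset_card_eq 3
  obtain ⟨x₁, x₂, x₃, h12, h13, h23, hT⟩ := Finset.card_eq_three.mp hTcard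
  have hmem : ∀ y ∈ T, y ∈ frontier P ∧ f y = h := fun y hy => hTsub hy
  have h1 := hmem x₁ (by rw [hT]; simp)
  have h2 := hmem x₂ (by rw [hT]; simp)
  have h3 := hmem x₃ (by rw [hT]; simp)
  have hfr_sub : frontier P ⊆ P := hcl.frontier_subset
  have hdisj : ∀ y, y ∈ frontier P → y ∉ interior P := by
    intro y hy
    rw [hcl.frontier_eq] at hy
    exact hy.2
  -- parametrize the line through x₁, x₂
  obtain ⟨g, hgcont, hgparam, hgp, hgq⟩ :=
    exists_param hfa0 h12 (show f x₂ = f x₁ by rw [h1.2, h2.2])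
  have hx₃line := hgparam x₃ (by rw [h3.2, h1.2])
  set τ : ℝ := g x₃ with hτ_def
  have hτ0 : τ ≠ 0 := by
    intro h0
    rw [h0, zero_smul, add_zero] at hx₃line
    exact h13 hx₃line.symm
  have hτ1 : τ ≠ 1 := by
    intro h0
    rw [h0, one_smul] at hx₃line
    have : x₃ = x₂ := by rw [hx₃line]; abel
    exact h23 this.symm
  -- in each case one of the three is in the open segment of the other two
  have hCI := fun {y₁ y₂ : ℝ × ℝ} (hy₁ : y₁ ∈ P) (hy₂ : y₂ ∈ P) (hfy₁ : f y₁ = h)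
    (hfy₂ : f y₂ = h) (hne : y₁ ≠ y₂) =>
    chord_interior hconv haP hnaP hfa hh1 hh2 hy₁ hy₂ hfy₁ hfy₂ hne
  rcases lt_trichotomy τ 0 with ht | ht | ht
  · -- x₁ between x₃ and x₂
    have hmem1 : x₁ ∈ openSegment ℝ x₃ x₂ := by
      refine mem_openSegment_of_param (-τ / (1 - τ)) (div_pos (by linarith) (by linarith))
        (by rw [div_lt_one (by linarith)]; linarith) ?_
      rw [hx₃line]
      have hexp : x₂ - (x₁ + τ • (x₂ - x₁)) = (1 - τ) • (x₂ - x₁) := by module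
      rw [hexp, smul_smul, div_mul_cancel₀ _ (by linarith : (1:ℝ) - τ ≠ 0)]
      module
    exact hdisj x₁ h1.1
      (hCI (hfr_sub h3.1) (hfr_sub h2.1) h3.2 h2.2 (Ne.symm h23) hmem1)
  · exact hτ0 ht
  · rcases lt_trichotomy τ 1 with ht' | ht' | ht'
    · -- x₃ between x₁ and x₂
      have hmem3 : x₃ ∈ openSegment ℝ x₁ x₂ :=
        mem_openSegment_of_param τ ht ht' hx₃line
      exact hdisj x₃ h3.1 (hCI (hfr_sub h1.1) (hfr_sub h2.1) h1.2 h2.2 h12 hmem3)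
    · exact hτ1 ht'
    · -- x₂ between x₁ and x₃
      have hmem2 : x₂ ∈ openSegment ℝ x₁ x₃ := by
        refine mem_openSegment_of_param (1 / τ) (by positivity)
          ((div_lt_one (by linarith)).mpr ht') ?_
        rw [hx₃line]
        have hexp : x₁ + τ • (x₂ - x₁) - x₁ = τ • (x₂ - x₁) := by module
        rw [hexp, smul_smul, one_div_mul_cancel (by linarith : τ ≠ 0), one_smul]
        abel
      exact hdisj x₂ h2.1 (hCI (hfr_sub h1.1) (hfr_sub h3.1) h1.2 h3.2 h13 hmem2)

/-- negation of an open segment. -/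
private lemma mem_openSegment_neg {a b x : ℝ × ℝ} (hx : x ∈ openSegment ℝ (-a) (-b)) :
    -x ∈ openSegment ℝ a b := by
  rw [openSegment_eq_image'] at hx ⊢
  obtain ⟨θ, hθ, hθeq⟩ := hx
  exact ⟨θ, hθ, by rw [← hθeq]; module⟩

/-- A nondegenerate open segment is uncountable. -/
private lemma openSegment_uncountable {a b : ℝ × ℝ} (hab : a ≠ b) :
    ¬ (openSegment ℝ a b).Countable := by
  intro hcount
  have hinj : Function.Injective (fun θ : ℝ => a + θ • (b - a)) := by
    intro s t hst
    simp only [add_right_inj] at hst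
    have : (s - t) • (b - a) = 0 := by rw [sub_smul, hst, sub_self]
    rcases smul_eq_zero.mp this with h' | h'
    · linarith [sub_eq_zero.mp h']
    · exact absurd h' (sub_ne_zero.mpr (Ne.symm hab))
  have hIoo : (Ioo (0:ℝ) 1).Countable := by
    have hsub : Ioo (0:ℝ) 1 ⊆ (fun θ : ℝ => a + θ • (b - a)) ⁻¹' openSegment ℝ a b := by
      intro θ hθ
      rw [openSegment_eq_image']
      exact mem_image_of_mem _ hθ
    exact (hcount.preimage hinj).mono hsub
  have := Cardinal.mk_Ioo_real (show (0:ℝ) < 1 by norm_num)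
  rw [← Cardinal.le_aleph0_iff_set_countable] at hIoo
  rw [this] at hIoo
  exact absurd hIoo (not_le.mpr Cardinal.aleph0_lt_continuum)

end Part6

section Part7

private lemma lattice_countable (u v : ℝ × ℝ) :
    {p : ℝ × ℝ | ∃ m n : ℤ, p = m • u + n • v}.Countable := by
  have : {p : ℝ × ℝ | ∃ m n : ℤ, p = m • u + n • v} =
      Set.range (fun mn : ℤ × ℤ => mn.1 • u + mn.2 • v) := by
    ext p
    constructor
    · rintro ⟨m, n, rfl⟩; exact ⟨(m, n), rfl⟩
    · rintro ⟨⟨m, n⟩, rfl⟩; exact ⟨m, n, rfl⟩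
  rw [this]
  exact countable_range _

private lemma lattice_inter_bounded_finite {u v : ℝ × ℝ} (hind : LinearIndependent ℝ ![u, v])
    {K : Set (ℝ × ℝ)} (hK : Bornology.IsBounded K) :
    ({p : ℝ × ℝ | ∃ m n : ℤ, p = m • u + n • v} ∩ K).Finite := by
  rw [LinearIndependent.pair_iff] at hind
  have hu0 : u ≠ 0 := by
    intro h0
    have := hind 1 0 (by rw [h0, smul_zero, zero_smul, add_zero])
    exact one_ne_zero this.1
  have hd : det2 u v ≠ 0 := by
    intro hd0
    obtain ⟨τ, hτ⟩ := det2_eq_zero_imp hu0 hd0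
    have := hind τ (-1) (by rw [hτ]; module)
    exact (by norm_num : (-1 : ℝ) ≠ 0) this.2
  obtain ⟨R, hR⟩ := hK.subset_closedBall 0
  have hdet_bound : ∀ z : ℝ × ℝ, z ∈ K → ∀ q : ℝ × ℝ, |det2 z q| ≤ R * (|q.1| + |q.2|) := by
    intro z hz q
    have hzR : ‖z‖ ≤ R := by
      have := hR hz
      rwa [Metric.mem_closedBall, dist_zero_right] at this
    have h1 : |z.1| ≤ R := le_trans (norm_fst_le z) hzR
    have h2 : |z.2| ≤ R := le_trans (norm_snd_le z) hzR
    have hR0 : 0 ≤ R := le_trans (abs_nonneg _) h1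
    calc |det2 z q| = |z.1 * q.2 - z.2 * q.1| := rfl
      _ ≤ |z.1 * q.2| + |z.2 * q.1| := abs_sub _ _
      _ = |z.1| * |q.2| + |z.2| * |q.1| := by rw [abs_mul, abs_mul]
      _ ≤ R * |q.2| + R * |q.1| := by
          have := abs_nonneg q.1
          have := abs_nonneg q.2
          nlinarith
      _ = R * (|q.1| + |q.2|) := by ring
  set M₁ : ℝ := R * (|v.1| + |v.2|) / |det2 u v|
  set M₂ : ℝ := R * (|u.1| + |u.2|) / |det2 u v|
  have key : ∀ m n : ℤ, ((m • u + n • v : ℝ × ℝ) ∈ K) → |(m:ℝ)| ≤ M₁ ∧ |(n:ℝ)| ≤ M₂ := by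
    intro m n hz
    set z : ℝ × ℝ := m • u + n • v with hz_def
    have hz1 : z = (m : ℝ) • u + (n : ℝ) • v := by
      rw [hz_def, ← Int.cast_smul_eq_zsmul ℝ m u, ← Int.cast_smul_eq_zsmul ℝ n v]
    have hm : det2 z v = (m : ℝ) * det2 u v := by
      rw [hz1]; unfold det2
      simp only [Prod.fst_add, Prod.snd_add, Prod.smul_fst, Prod.smul_snd, smul_eq_mul]
      ring
    have hn : det2 z u = -((n : ℝ) * det2 u v) := by
      rw [hz1]; unfold det2
      simp only [Prod.fst_add, Prod.snd_add, Prod.smul_fst, Prod.smul_snd, smul_eq_mul]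
      ring
    constructor
    · have := hdet_bound z hz v
      rw [hm, abs_mul] at this
      rw [show M₁ = R * (|v.1| + |v.2|) / |det2 u v| from rfl, le_div_iff₀ (abs_pos.mpr hd)]
      linarith
    · have := hdet_bound z hz u
      rw [hn, abs_neg, abs_mul] at this
      rw [show M₂ = R * (|u.1| + |u.2|) / |det2 u v| from rfl, le_div_iff₀ (abs_pos.mpr hd)]
      linarith
  set N₁ : ℤ := ⌈M₁⌉
  set N₂ : ℤ := ⌈M₂⌉
  have hsub : {p : ℝ × ℝ | ∃ m n : ℤ, p = m • u + n • v} ∩ K ⊆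
      (fun mn : ℤ × ℤ => mn.1 • u + mn.2 • v) ''
        ((Icc (-N₁) N₁ : Set ℤ) ×ˢ (Icc (-N₂) N₂ : Set ℤ)) := by
    rintro p ⟨⟨m, n, rfl⟩, hpK⟩
    obtain ⟨hm, hn⟩ := key m n hpK
    refine ⟨(m, n), ⟨?_, ?_⟩, rfl⟩
    · have h1 : (m : ℝ) ≤ N₁ := le_trans (le_abs_self _) (le_trans hm (Int.le_ceil _))
      have h2 : -(N₁ : ℝ) ≤ (m : ℝ) := by
        have := neg_abs_le (m : ℝ)
        have h3 : -(N₁:ℝ) ≤ -|(m:ℝ)| := by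
          apply neg_le_neg
          exact le_trans hm (Int.le_ceil _)
        linarith
      constructor
      · exact_mod_cast h2
      · exact_mod_cast h1
    · have h1 : (n : ℝ) ≤ N₂ := le_trans (le_abs_self _) (le_trans hn (Int.le_ceil _))
      have h2 : -(N₂ : ℝ) ≤ (n : ℝ) := by
        have h3 : -(N₂:ℝ) ≤ -|(n:ℝ)| := by
          apply neg_le_neg
          exact le_trans hn (Int.le_ceil _)
        linarith [neg_abs_le (n:ℝ)]
      constructor
      · exact_mod_cast h2
      · exact_mod_cast h1
  exact Set.Finite.subset (((Set.finite_Icc _ _).prod (Set.finite_Icc _ _)).image _) hsub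

end Part7

/-- `K + X` is a `k`-fold tiling of the plane. -/
def IsKFoldTiling (K X : Set (ℝ × ℝ)) (k : ℕ) : Prop :=
  (∀ y : ℝ × ℝ, ∃ S : Finset (ℝ × ℝ), ↑S ⊆ {x ∈ X | y - x ∈ K} ∧ k ≤ S.card) ∧
  (∀ y : ℝ × ℝ, ∀ S : Finset (ℝ × ℝ), ↑S ⊆ {x ∈ X | y - x ∈ interior K} → S.card ≤ k)

/-- Bolle's condition 2: if a centrally symmetric convex polygon `P` centered at the
origin forms a `k`-fold lattice tiling with lattice `Λ`, then the relative interior of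
every edge of `P` (a segment between two extreme points lying in the boundary of `P`)
contains a point of `(1/2)Λ`. -/
theorem edge_relint_contains_half_lattice_point (V : Finset (ℝ × ℝ))
    (P : Set (ℝ × ℝ)) (hP : P = convexHull ℝ ↑V) (hint : (interior P).Nonempty)
    (hsymm : ∀ x ∈ P, -x ∈ P)
    (Λ : Set (ℝ × ℝ))
    (hΛ : ∃ u v : ℝ × ℝ, LinearIndependent ℝ ![u, v] ∧
      Λ = {p | ∃ m n : ℤ, p = m • u + n • v})
    (k : ℕ) (hk : 0 < k) (htile : IsKFoldTiling P Λ k) :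
    ∀ a b : ℝ × ℝ, a ≠ b →
      a ∈ Set.extremePoints ℝ P → b ∈ Set.extremePoints ℝ P →
      segment ℝ a b ⊆ frontier P →
      ∃ p ∈ openSegment ℝ a b, (2:ℝ) • p ∈ Λ := by
  classical
  intro a b hab ha hb hG
  -- basic facts about P
  have hPconv : Convex ℝ P := hP ▸ convex_convexHull ℝ _
  have hPcomp : IsCompact P := hP ▸ V.finite_toSet.isCompact_convexHull ℝ
  have hPcl : IsClosed P := hPcomp.isClosed
  have hPbdd : Bornology.IsBounded P := hPcomp.isBounded
  have haP : a ∈ P := ha.1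
  have hbP : b ∈ P := hb.1
  -- `0` is an interior point
  obtain ⟨z₀, hz₀⟩ := hint
  have hz₀' : -z₀ ∈ interior P := by
    have hopen : IsOpen (-interior P) := isOpen_interior.neg
    have hsub : -interior P ⊆ P := by
      intro x hx
      rw [Set.mem_neg] at hx
      have h' := hsymm _ (interior_subset hx)
      rwa [neg_neg] at h'
    have hsub2 : -interior P ⊆ interior P := interior_maximal hsub hopen
    apply hsub2
    rw [Set.mem_neg, neg_neg]
    exact hz₀
  have h0int : (0 : ℝ × ℝ) ∈ interior P := by
    have hcomb := hPconv.interior hz₀ hz₀'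
      (by norm_num : (0:ℝ) ≤ 1/2) (by norm_num : (0:ℝ) ≤ 1/2) (by norm_num)
    have : (1/2 : ℝ) • z₀ + (1/2 : ℝ) • (-z₀) = 0 := by module
    rwa [this] at hcomb
  -- supporting functional at the midpoint of the edge
  set t₀ : ℝ × ℝ := (1/2 : ℝ) • a + (1/2 : ℝ) • b with ht₀_def
  have ht₀seg : t₀ ∈ segment ℝ a b := ⟨1/2, 1/2, by norm_num, by norm_num, by norm_num, rfl⟩
  have ht₀ni : t₀ ∉ interior P := by
    have := hG ht₀seg
    rw [hPcl.frontier_eq] at this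
    exact this.2
  obtain ⟨f, hf⟩ := geometric_hahn_banach_open_point hPconv.interior isOpen_interior ht₀ni
  set c : ℝ := f t₀ with hc_def
  have hcpos : 0 < c := by
    have := hf 0 h0int
    simpa using this
  have hle : ∀ x ∈ P, f x ≤ c := by
    intro x hxP
    by_contra hgt
    push_neg at hgt
    have hfx : 0 < f x := lt_trans hcpos hgt
    set θ : ℝ := 1 - c / f x with hθ_def
    have hθ1 : θ < 1 := by
      rw [hθ_def]
      have : 0 < c / f x := div_pos hcpos hfx
      linarith
    have hθ0 : 0 < θ := by
      rw [hθ_def]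
      have : c / f x < 1 := (div_lt_one hfx).mpr hgt
      linarith
    have hxcl : x ∈ closure P := subset_closure hxP
    have hmem := hPconv.combo_interior_closure_mem_interior h0int hxcl hθ0
      (by linarith : (0:ℝ) ≤ 1 - θ) (by ring)
    have hflt := hf _ hmem
    rw [map_add, map_smul, map_smul, map_zero, smul_zero, zero_add, smul_eq_mul] at hflt
    rw [hθ_def] at hflt
    have : (1 - (1 - c / f x)) * f x = c := by field_simp; ring
    rw [this] at hflt
    exact lt_irrefl c hflt
  have hfab : f a = c ∧ f b = c := by
    have h₁ := hle a haP
    have h₂ := hle b hbP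
    have h₃ : (1/2) * f a + (1/2) * f b = c := by
      rw [hc_def, ht₀_def, map_add, map_smul, map_smul, smul_eq_mul, smul_eq_mul]
    constructor <;> linarith
  have hgec : ∀ x ∈ P, -c ≤ f x := by
    intro x hx
    have := hle (-x) (hsymm x hx)
    rw [map_neg] at this
    linarith
  have hfa0 : f a ≠ 0 := by rw [hfab.1]; exact ne_of_gt hcpos
  -- the two faces
  have hface : {x ∈ P | f x = c} = segment ℝ a b :=
    face_eq hPconv hfa0 ha hb hab hfab.1 hfab.2 hle
  have hsegP : segment ℝ a b ⊆ P := by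
    intro s hs
    rw [← hface] at hs
    exact hs.1
  have hfaceneg : {x ∈ P | f x = -c} = segment ℝ (-a) (-b) := by
    have hfa0' : (-f) a ≠ 0 := by
      show -(f a) ≠ 0
      rw [hfab.1]
      exact neg_ne_zero.mpr (ne_of_gt hcpos)
    have hres := face_eq hPconv hfa0' (neg_extremePoint hsymm ha) (neg_extremePoint hsymm hb)
      (by intro h'; exact hab (neg_injective h'))
      (show (-f) (-a) = c by simp [hfab.1])
      (show (-f) (-b) = c by simp [hfab.2])
      (fun x hx => by
        show -(f x) ≤ c
        have := hgec x hx
        linarith)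
    rw [← hres]
    ext x
    constructor
    · rintro ⟨hxP, hxc⟩
      exact ⟨hxP, by simp [hxc]⟩
    · rintro ⟨hxP, hxc⟩
      refine ⟨hxP, ?_⟩
      have : -(f x) = c := hxc
      linarith
  -- inward direction
  set w : ℝ × ℝ := c⁻¹ • a with hw_def
  have hfw : f w = 1 := by
    rw [hw_def, map_smul, hfab.1, smul_eq_mul, inv_mul_cancel₀ (ne_of_gt hcpos)]
  -- lattice data
  obtain ⟨u, v, hind, hΛeq⟩ := hΛ
  have hΛcount : Λ.Countable := hΛeq ▸ lattice_countable u v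
  have h0Λ : (0 : ℝ × ℝ) ∈ Λ := by
    rw [hΛeq]
    exact ⟨0, 0, by simp⟩
  by_contra hcon
  push_neg at hcon
  -- the countable set of bad points on the edge
  set Bad : Set (ℝ × ℝ) := {t ∈ openSegment ℝ a b | ∃ l ∈ Λ, t - l ∈ frontier P ∧
    t - l ∉ openSegment ℝ a b ∧ t - l ∉ openSegment ℝ (-a) (-b)} with hBad_def
  have hBadcount : Bad.Countable := by
    have hsub : Bad ⊆ ⋃ l ∈ Λ, (fun x => x + l) ''
        ({x ∈ frontier P | f x = c - f l} \
          (openSegment ℝ a b ∪ openSegment ℝ (-a) (-b))) := by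
      rintro t ⟨htseg, l, hlΛ, hfr, hn1, hn2⟩
      have htc : f t = c := by
        have := openSegment_subset_segment ℝ a b htseg
        rw [← hface] at this
        exact this.2
      refine Set.mem_biUnion hlΛ ⟨t - l, ⟨⟨hfr, ?_⟩, ?_⟩, by module⟩
      · rw [map_sub, htc]
      · rintro (h' | h')
        · exact hn1 h'
        · exact hn2 h'
    apply Set.Countable.mono hsub
    apply Set.Countable.biUnion hΛcount
    intro l _
    apply Set.Countable.image
    apply Set.Finite.countable
    set h' : ℝ := c - f l with hh'_def
    have hfrP : frontier P ⊆ P := hPcl.frontier_subset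
    rcases lt_trichotomy h' (-c) with hcase | hcase | hcase
    · apply Set.Finite.subset (Set.finite_empty)
      rintro x ⟨⟨hxf, hxh⟩, _⟩
      have := hgec x (hfrP hxf)
      rw [hxh] at this
      linarith
    · apply Set.Finite.subset ((Set.finite_singleton (-b)).insert (-a))
      rintro x ⟨⟨hxf, hxh⟩, hxn⟩
      have hxseg : x ∈ segment ℝ (-a) (-b) := by
        rw [← hfaceneg]
        exact ⟨hfrP hxf, by rw [hxh, hcase]⟩
      rw [← insert_endpoints_openSegment] at hxseg
      rcases hxseg with h1 | h1
      · rw [h1]; exact mem_insert _ _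
      · rcases h1 with h2 | h2
        · rw [h2]; exact mem_insert_of_mem _ rfl
        · exact absurd (Or.inr h2) hxn
    · rcases lt_trichotomy h' c with hcase2 | hcase2 | hcase2
      · apply Set.Finite.subset
          (level_frontier_finite hPconv hPcl haP (hsymm a haP) hfab.1 hcase hcase2)
        rintro x ⟨hx, _⟩
        exact hx
      · apply Set.Finite.subset ((Set.finite_singleton b).insert a)
        rintro x ⟨⟨hxf, hxh⟩, hxn⟩
        have hxseg : x ∈ segment ℝ a b := by
          rw [← hface]
          exact ⟨hfrP hxf, by rw [hxh, hcase2]⟩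
        rw [← insert_endpoints_openSegment] at hxseg
        rcases hxseg with h1 | h1
        · rw [h1]; exact mem_insert _ _
        · rcases h1 with h2 | h2
          · rw [h2]; exact mem_insert_of_mem _ rfl
          · exact absurd (Or.inl h2) hxn
      · apply Set.Finite.subset (Set.finite_empty)
        rintro x ⟨⟨hxf, hxh⟩, _⟩
        have := hle x (hfrP hxf)
        rw [hxh] at this
        linarith
  -- pick a good point on the edge
  have hnotsub : ¬ (openSegment ℝ a b ⊆ Bad) := by
    intro hsub
    exact openSegment_uncountable hab (Set.Countable.mono hsub hBadcount)
  obtain ⟨t', ht'seg, ht'nb⟩ := Set.not_subset.mp hnotsub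
  have hgood : ∀ l ∈ Λ, t' - l ∈ frontier P →
      t' - l ∈ openSegment ℝ a b ∨ t' - l ∈ openSegment ℝ (-a) (-b) := by
    intro l hl hfr
    by_contra hcontra
    push_neg at hcontra
    exact ht'nb ⟨ht'seg, l, hl, hfr, hcontra.1, hcontra.2⟩
  have ht'mem : t' ∈ P ∧ f t' = c := by
    have := openSegment_subset_segment ℝ a b ht'seg
    rw [← hface] at this
    exact this
  -- inward motion from t' lands in the interior
  have hinward : ∃ ε₀ > 0, ∀ ε : ℝ, 0 < ε → ε < ε₀ → t' - ε • w ∈ interior P := by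
    obtain ⟨g, hgcont, hgparam, hgp, hgq⟩ :=
      exists_param hfa0 hab (show f b = f a by rw [hfab.1, hfab.2])
    obtain ⟨θ, hθ, hθeq⟩ := (openSegment_eq_image' ℝ a b ▸ ht'seg :
      t' ∈ (fun θ : ℝ => a + θ • (b - a)) '' Ioo (0:ℝ) 1)
    have hθeq' : t' = a + θ • (b - a) := hθeq.symm
    have hgt' : g t' = θ := by
      have h1 := hgparam t' (by rw [ht'mem.2, hfab.1])
      have h3 : a + g t' • (b - a) = a + θ • (b - a) := h1.symm.trans hθeq'
      have h4 : g t' • (b - a) = θ • (b - a) := add_left_cancel h3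
      have h5 : (g t' - θ) • (b - a) = 0 := by rw [sub_smul, h4, sub_self]
      rcases smul_eq_zero.mp h5 with h' | h'
      · have := sub_eq_zero.mp h'; linarith [this]
      · exact absurd h' (sub_ne_zero.mpr (Ne.symm hab))
    set φ : ℝ → ℝ := fun ε => g ((1 - ε / c)⁻¹ • (t' - ε • w)) with hφ_def
    have hφcont : ContinuousAt φ 0 := by
      apply hgcont.continuousAt.comp
      apply ContinuousAt.fun_smul
      · apply ContinuousAt.inv₀
        · fun_prop
        · simp
      · fun_prop
    have hφ0 : φ 0 = θ := by
      have : φ 0 = g t' := by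
        simp only [hφ_def]
        norm_num
      rw [this, hgt']
    have hev : ∀ᶠ ε : ℝ in nhds 0, φ ε ∈ Ioo (0:ℝ) 1 := by
      apply hφcont.eventually_mem
      rw [hφ0]
      exact isOpen_Ioo.mem_nhds hθ
    obtain ⟨δ₁, hδ₁, hball⟩ := Metric.eventually_nhds_iff.mp hev
    refine ⟨min δ₁ c, lt_min hδ₁ hcpos, ?_⟩
    intro ε hε0 hεlt
    have hεδ : ε < δ₁ := lt_of_lt_of_le hεlt (min_le_left _ _)
    have hεc : ε < c := lt_of_lt_of_le hεlt (min_le_right _ _)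
    have hεc' : 0 < 1 - ε / c := by
      have : ε / c < 1 := (div_lt_one hcpos).mpr hεc
      linarith
    have hεc'' : (1:ℝ) - ε / c ≠ 0 := ne_of_gt hεc'
    set z : ℝ × ℝ := (1 - ε / c)⁻¹ • (t' - ε • w) with hz_def
    have hφε : φ ε ∈ Ioo (0:ℝ) 1 := by
      apply hball
      rw [Real.dist_eq, sub_zero, abs_of_pos hε0]
      exact hεδ
    have hfz : f z = c := by
      rw [hz_def, map_smul, map_sub, map_smul, ht'mem.2, hfw]
      simp only [smul_eq_mul, mul_one]
      rw [one_sub_div (ne_of_gt hcpos), inv_div, div_mul_eq_mul_div, mul_div_assoc,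
        div_self (by linarith : c - ε ≠ 0), mul_one]
    have hzline := hgparam z (by rw [hfz, hfab.1])
    have hzseg : z ∈ segment ℝ a b :=
      mem_segment_of_param (g z) (le_of_lt hφε.1) (le_of_lt hφε.2) hzline
    have hzP : z ∈ P := hsegP hzseg
    have hcomb := hPconv.combo_interior_closure_mem_interior h0int (subset_closure hzP)
      (div_pos hε0 hcpos) (le_of_lt hεc') (by ring)
    have heq : (ε / c) • (0 : ℝ × ℝ) + (1 - ε / c) • z = t' - ε • w := by
      rw [smul_zero, zero_add, hz_def, smul_inv_smul₀ hεc'']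
    rwa [heq] at hcomb
  obtain ⟨ε₀, hε₀, hinw⟩ := hinward
  -- bounded region for relevant lattice points
  set K : Set (ℝ × ℝ) := {q | ∃ s : ℝ, 0 ≤ s ∧ s ≤ 1 ∧ ∃ p ∈ P, q = t' + s • w - p}
    with hK_def
  have hKbdd : Bornology.IsBounded K := by
    obtain ⟨R, hR⟩ := hPbdd.subset_closedBall 0
    apply Bornology.IsBounded.subset (Metric.isBounded_closedBall
      (x := (0 : ℝ × ℝ)) (r := ‖t'‖ + ‖w‖ + |R|))
    rintro q ⟨s, hs0, hs1, p, hpP, rfl⟩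
    rw [Metric.mem_closedBall, dist_zero_right]
    have hpR : ‖p‖ ≤ |R| := by
      have := hR hpP
      rw [Metric.mem_closedBall, dist_zero_right] at this
      exact le_trans this (le_abs_self R)
    have hsw : ‖s • w‖ ≤ ‖w‖ := by
      rw [norm_smul, Real.norm_eq_abs, abs_of_nonneg hs0]
      nlinarith [norm_nonneg w]
    calc ‖t' + s • w - p‖ ≤ ‖t' + s • w‖ + ‖p‖ := norm_sub_le _ _
      _ ≤ ‖t'‖ + ‖s • w‖ + ‖p‖ := by linarith [norm_add_le t' (s • w)]
      _ ≤ ‖t'‖ + ‖w‖ + |R| := by linarith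
  have hΛK : (Λ ∩ K).Finite := hΛeq ▸ lattice_inter_bounded_finite hind hKbdd
  set A : Finset (ℝ × ℝ) := hΛK.toFinset with hA_def
  -- the sequence of covering configurations
  choose S hS₁ hS₂ using htile.1
  set y : ℕ → ℝ × ℝ := fun j => t' + (1/(j+1) : ℝ) • w with hy_def
  have hyε : ∀ j : ℕ, 0 < (1/(j+1) : ℝ) ∧ (1/(j+1) : ℝ) ≤ 1 := by
    intro j
    constructor
    · positivity
    · rw [div_le_one (by positivity)]
      have : (0:ℝ) ≤ j := Nat.cast_nonneg j
      linarith
  have hfy : ∀ j : ℕ, f (y j) = c + (1/(j+1) : ℝ) := by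
    intro j
    rw [hy_def]
    simp only
    rw [map_add, map_smul, hfw, ht'mem.2, smul_eq_mul, mul_one]
  have hSA : ∀ j : ℕ, S (y j) ⊆ A := by
    intro j
    intro l hl
    have hmem := hS₁ (y j) (Finset.mem_coe.mpr hl)
    obtain ⟨hlΛ, hyP⟩ := hmem
    rw [hA_def, Set.Finite.mem_toFinset]
    refine ⟨hlΛ, 1/(j+1), le_of_lt (hyε j).1, (hyε j).2, y j - l, hyP, ?_⟩
    simp only [hy_def]
    module
  -- pigeonhole: infinitely many j share the same configuration
  have hpigeon : ∃ T : Finset (ℝ × ℝ), {j : ℕ | S (y j) = T}.Infinite := by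
    have hmem : ∀ j : ℕ, S (y j) ∈ A.powerset := fun j => Finset.mem_powerset.mpr (hSA j)
    obtain ⟨⟨T, hT⟩, hfib⟩ := Finite.exists_infinite_fiber
      (fun j : ℕ => (⟨S (y j), hmem j⟩ : {T // T ∈ A.powerset}))
    refine ⟨T, ?_⟩
    rw [← Set.infinite_coe_iff]
    apply Set.infinite_coe_iff.mpr
    have hsub : (fun j : ℕ => (⟨S (y j), hmem j⟩ : {T // T ∈ A.powerset})) ⁻¹' {⟨T, hT⟩} ⊆
        {j : ℕ | S (y j) = T} := by
      intro j hj
      have : (⟨S (y j), hmem j⟩ : {T // T ∈ A.powerset}) = ⟨T, hT⟩ := hj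
      exact congrArg Subtype.val this
    exact Set.Infinite.mono hsub (Set.infinite_coe_iff.mp hfib)
  obtain ⟨T, hTinf⟩ := hpigeon
  have hTjex : ∀ N : ℕ, ∃ j, N ≤ j ∧ S (y j) = T := by
    intro N
    obtain ⟨j, hj1, hj2⟩ := hTinf.exists_notMem_finset (Finset.range N)
    exact ⟨j, by simpa using hj2, hj1⟩
  obtain ⟨j₀, _, hj₀⟩ := hTjex 0
  have hTcard : k ≤ T.card := by rw [← hj₀]; exact hS₂ (y j₀)
  have hTsub : ∀ j : ℕ, S (y j) = T → ↑T ⊆ {x ∈ Λ | y j - x ∈ P} := by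
    intro j hj
    rw [← hj]
    exact hS₁ (y j)
  have hTΛ : ∀ l ∈ T, l ∈ Λ := fun l hl => (hTsub j₀ hj₀ (Finset.mem_coe.mpr hl)).1
  -- every l in T has t' - l in P
  have hTP : ∀ l ∈ T, t' - l ∈ P := by
    intro l hl
    rw [← hPcl.closure_eq]
    rw [Metric.mem_closure_iff]
    intro δ hδ
    obtain ⟨N, hN⟩ := exists_nat_gt (‖w‖ / δ)
    obtain ⟨j, hjN, hjT⟩ := hTjex N
    refine ⟨y j - l, (hTsub j hjT (Finset.mem_coe.mpr hl)).2, ?_⟩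
    have : t' - l - (y j - l) = -((1/(j+1) : ℝ) • w) := by rw [hy_def]; module
    rw [dist_eq_norm, this, norm_neg, norm_smul, Real.norm_eq_abs]
    have hj1 : (0:ℝ) < j + 1 := by positivity
    rw [abs_of_pos (by positivity : (0:ℝ) < 1/(j+1))]
    have hwd : ‖w‖ < δ * (N + 1) := by
      have h1 : ‖w‖ / δ < N + 1 := by linarith [hN]
      calc ‖w‖ = (‖w‖ / δ) * δ := by field_simp
        _ < (N + 1) * δ := by
            apply mul_lt_mul_of_pos_right h1 hδ
        _ = δ * (N + 1) := by ring
    have hNj : (N:ℝ) + 1 ≤ (j:ℝ) + 1 := by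
      have : (N:ℝ) ≤ j := Nat.cast_le.mpr hjN
      linarith
    calc 1/((j:ℝ)+1) * ‖w‖ ≤ 1/((N:ℝ)+1) * ‖w‖ := by
          apply mul_le_mul_of_nonneg_right _ (norm_nonneg w)
          apply div_le_div_of_nonneg_left (by norm_num) (by positivity) hNj
      _ < δ := by
          rw [div_mul_eq_mul_div, one_mul, div_lt_iff₀ (by positivity)]
          linarith [hwd]
  -- each l in T is strictly below level c
  have hTflt : ∀ l ∈ T, f (t' - l) < c := by
    intro l hl
    have hyP := (hTsub j₀ hj₀ (Finset.mem_coe.mpr hl)).2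
    have h1 := hle _ hyP
    have h2 : f (y j₀ - l) = f (t' - l) + (1/(j₀+1) : ℝ) := by
      rw [map_sub, hfy j₀, map_sub, ht'mem.2]
      ring
    have h3 := (hyε j₀).1
    linarith
  -- each l in T yields an interior point
  have hTint : ∀ l ∈ T, t' - l ∈ interior P := by
    intro l hl
    by_contra hni
    have hfr : t' - l ∈ frontier P := by
      rw [hPcl.frontier_eq]
      exact ⟨hTP l hl, hni⟩
    rcases hgood l (hTΛ l hl) hfr with hcase | hcase
    · have : f (t' - l) = c := by
        have := openSegment_subset_segment ℝ a b hcase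
        rw [← hface] at this
        exact this.2
      linarith [hTflt l hl]
    · have hneg : -(t' - l) ∈ openSegment ℝ a b := mem_openSegment_neg hcase
      have hmid : (1/2:ℝ) • t' + (1/2:ℝ) • (l - t') ∈ openSegment ℝ a b := by
        have := convex_openSegment (𝕜 := ℝ) a b ht'seg
          (show l - t' ∈ openSegment ℝ a b by
            have : l - t' = -(t' - l) := by abel
            rw [this]; exact hneg)
          (by norm_num : (0:ℝ) ≤ 1/2) (by norm_num : (0:ℝ) ≤ 1/2) (by norm_num)
        exact this
      apply hcon _ hmid
      have : (2:ℝ) • ((1/2:ℝ) • t' + (1/2:ℝ) • (l - t')) = l := by module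
      rw [this]
      exact hTΛ l hl
  -- a uniform interior radius
  have hTne : T.Nonempty := Finset.card_pos.mp (lt_of_lt_of_le hk hTcard)
  have hballs : ∀ l ∈ T, ∃ r > 0, Metric.ball (t' - l) r ⊆ interior P := fun l hl =>
    Metric.isOpen_iff.mp isOpen_interior _ (hTint l hl)
  choose! ρ hρpos hρball using hballs
  set r : ℝ := T.inf' hTne ρ with hr_def
  have hrpos : 0 < r := by
    rw [hr_def, Finset.lt_inf'_iff]
    exact fun l hl => hρpos l hl
  have hrle : ∀ l ∈ T, r ≤ ρ l := fun l hl => Finset.inf'_le _ hl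
  -- choose a suitable index j
  obtain ⟨N, hN⟩ := exists_nat_gt (max (1/ε₀) ((‖w‖ + 1)/r))
  obtain ⟨j, hjN, hjT⟩ := hTjex N
  have hjR : max (1/ε₀) ((‖w‖ + 1)/r) < (j:ℝ) + 1 := by
    have h1 : (N:ℝ) ≤ j := Nat.cast_le.mpr hjN
    linarith
  set ε : ℝ := (1/(j+1) : ℝ) with hε_def
  have hεpos : 0 < ε := (hyε j).1
  have hεε₀ : ε < ε₀ := by
    have h1 : 1/ε₀ < (j:ℝ) + 1 := lt_of_le_of_lt (le_max_left _ _) hjR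
    rw [hε_def, div_lt_iff₀ (by positivity : (0:ℝ) < (j:ℝ)+1)]
    rw [div_lt_iff₀ hε₀] at h1
    nlinarith
  have hεw : ε * ‖w‖ < r := by
    have h1 : (‖w‖ + 1)/r < (j:ℝ) + 1 := lt_of_le_of_lt (le_max_right _ _) hjR
    rw [div_lt_iff₀ hrpos] at h1
    have h2 : ε * (‖w‖ + 1) < r := by
      rw [hε_def]
      rw [div_mul_eq_mul_div, one_mul, div_lt_iff₀ (by positivity : (0:ℝ) < (j:ℝ)+1)]
      nlinarith
    nlinarith [hεpos]
  set y' : ℝ × ℝ := t' - ε • w with hy'_def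
  have h0T : (0 : ℝ × ℝ) ∉ T := by
    intro h0
    have hyP := (hTsub j₀ hj₀ (Finset.mem_coe.mpr h0)).2
    rw [sub_zero] at hyP
    have h1 := hle _ hyP
    rw [hfy j₀] at h1
    linarith [(hyε j₀).1]
  set T' : Finset (ℝ × ℝ) := insert (0 : ℝ × ℝ) T with hT'_def
  have hT'sub : ↑T' ⊆ {x ∈ Λ | y' - x ∈ interior P} := by
    intro l hl
    rcases Finset.mem_insert.mp (Finset.mem_coe.mp hl) with rfl | hlT
    · exact ⟨h0Λ, by rw [sub_zero, hy'_def]; exact hinw ε hεpos hεε₀⟩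
    · refine ⟨hTΛ l hlT, ?_⟩
      apply hρball l hlT
      rw [Metric.mem_ball, dist_eq_norm]
      have heq : y' - l - (t' - l) = -(ε • w) := by rw [hy'_def]; abel
      rw [heq, norm_neg, norm_smul, Real.norm_eq_abs, abs_of_pos hεpos]
      exact lt_of_lt_of_le hεw (hrle l hlT)
  have hfinal := htile.2 y' T' hT'sub
  have hcards : T'.card = T.card + 1 := Finset.card_insert_of_notMem h0T
  rw [hcards] at hfinal
  omega
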